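/- Let w = (w(n))_{n≥0} be a sequence of positive numbers and W(n) = Σ_{k=0}^n w(k). For 0 < p < ∞, the discrete Hardy operator A_d f(n) = (1/(n+1)) Σ_{k=0}^n f(k) maps ℓ^{p,∞}_dec(w) boundedly into ℓ^{p,∞}(w) if and only if Σ_{k=0}^n W(k)^{-1/p} ≤ C (n+1) W(n)^{-1/p} for all n ≥ 0. -/

import Mathlib

open MeasureTheory Set
open scoped ENNReal NNReal

/-- For a sequence of positive weights `w` with partial sums `W(n)`, the discrete Hardy
operator `A_d f(n) = (1/(n+1)) Σ_{k≤n} f(k)` is bounded from `ℓ^{p,∞}_dec(w)` to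
`ℓ^{p,∞}(w)` iff `Σ_{k≤n} W(k)^{-1/p} ≤ C (n+1) W(n)^{-1/p}` for all `n`.
(For nonincreasing nonnegative sequences `g`, `‖g‖_{ℓ^{p,∞}(w)} = sup_n W(n)^{1/p} g(n)`.) -/
theorem stmt7 (p : ℝ) (hp : 0 < p) (w : ℕ → ℝ) (hw : ∀ n, 0 < w n) :
    (∃ C : ℝ≥0, ∀ f : ℕ → ℝ≥0∞, Antitone f →
        (⨆ n : ℕ, ENNReal.ofReal ((∑ k ∈ Finset.range (n + 1), w k) ^ (1 / p)) *
            ((∑ k ∈ Finset.range (n + 1), f k) / ((n : ℝ≥0∞) + 1))) ≤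
          C * ⨆ n : ℕ, ENNReal.ofReal ((∑ k ∈ Finset.range (n + 1), w k) ^ (1 / p)) * f n) ↔
    ∃ C : ℝ, 0 < C ∧ ∀ n : ℕ,
      (∑ k ∈ Finset.range (n + 1), (∑ j ∈ Finset.range (k + 1), w j) ^ (-(1 / p))) ≤
        C * ((n : ℝ) + 1) * (∑ k ∈ Finset.range (n + 1), w k) ^ (-(1 / p)) := by
  set W : ℕ → ℝ := fun n => ∑ k ∈ Finset.range (n + 1), w k with hWdef
  have hW : ∀ n, 0 < W n := fun n => Finset.sum_pos (fun k _ => hw k) (by simp)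
  have hWmono : Monotone W := fun a b hab => Finset.sum_le_sum_of_subset_of_nonneg
    (Finset.range_subset_range.2 (by omega)) (fun k _ _ => (hw k).le)
  constructor
  · rintro ⟨C, hC⟩
    refine ⟨max (C : ℝ) 1, lt_of_lt_of_le one_pos (le_max_right _ _), fun n => ?_⟩
    set f : ℕ → ℝ≥0∞ := fun k => ENNReal.ofReal ((W k) ^ (-(1 / p))) with hfdef
    have hf : Antitone f := by
      intro a b hab
      apply ENNReal.ofReal_le_ofReal
      rw [Real.rpow_neg (hW b).le, Real.rpow_neg (hW a).le]
      exact inv_anti₀ (Real.rpow_pos_of_pos (hW a) _)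
        (Real.rpow_le_rpow (hW a).le (hWmono hab) (by positivity))
    have key := hC f hf
    have hone : ∀ m : ℕ, ENNReal.ofReal ((W m) ^ (1 / p)) * f m = 1 := by
      intro m
      rw [hfdef]
      rw [← ENNReal.ofReal_mul (Real.rpow_nonneg (hW m).le _), ← Real.rpow_add (hW m)]
      simp
    simp_rw [show ∀ m : ℕ, ENNReal.ofReal ((∑ k ∈ Finset.range (m + 1), w k) ^ (1 / p)) * f m = 1 from hone, iSup_const, mul_one] at key
    have hterm : ENNReal.ofReal ((W n) ^ (1 / p)) *
        ((∑ k ∈ Finset.range (n + 1), f k) / ((n : ℝ≥0∞) + 1)) ≤ C :=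
      le_trans (le_iSup (fun m => ENNReal.ofReal ((W m) ^ (1 / p)) *
        ((∑ k ∈ Finset.range (m + 1), f k) / ((m : ℝ≥0∞) + 1))) n) key
    set S : ℝ := ∑ k ∈ Finset.range (n + 1), (W k) ^ (-(1 / p)) with hSdef
    have hSnn : 0 ≤ S := Finset.sum_nonneg fun k _ => Real.rpow_nonneg (hW k).le _
    have hsum : (∑ k ∈ Finset.range (n + 1), f k) = ENNReal.ofReal S := by
      rw [hSdef, ENNReal.ofReal_sum_of_nonneg (fun k _ => Real.rpow_nonneg (hW k).le _)]
    rw [hsum] at hterm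
    have hd : ((n : ℝ≥0∞) + 1) = ENNReal.ofReal ((n : ℝ) + 1) := by
      rw [ENNReal.ofReal_add (Nat.cast_nonneg n) zero_le_one]
      simp
    rw [hd, ← mul_div_assoc, ← ENNReal.ofReal_mul (Real.rpow_nonneg (hW n).le _),
      ENNReal.div_le_iff (by positivity) ENNReal.ofReal_ne_top,
      ← ENNReal.ofReal_coe_nnreal, ← ENNReal.ofReal_mul C.coe_nonneg,
      ENNReal.ofReal_le_ofReal_iff (by positivity)] at hterm
    -- hterm : W n ^ (1/p) * S ≤ C * (n + 1)
    have hx : (0:ℝ) < (W n) ^ (1 / p) := Real.rpow_pos_of_pos (hW n) _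
    show S ≤ max (C:ℝ) 1 * ((n:ℝ) + 1) * (W n) ^ (-(1 / p))
    rw [Real.rpow_neg (hW n).le, ← div_eq_mul_inv, le_div_iff₀ hx]
    calc S * (W n) ^ (1 / p) = (W n) ^ (1 / p) * S := mul_comm _ _
      _ ≤ (C:ℝ) * ((n:ℝ) + 1) := hterm
      _ ≤ max (C:ℝ) 1 * ((n:ℝ) + 1) := by
          apply mul_le_mul_of_nonneg_right (le_max_left _ _) (by positivity)
  · rintro ⟨C, hCpos, hC⟩
    refine ⟨C.toNNReal, fun f hf => ?_⟩
    set M : ℝ≥0∞ := ⨆ m : ℕ, ENNReal.ofReal ((W m) ^ (1 / p)) * f m with hMdef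
    have hfk : ∀ k, f k ≤ M * ENNReal.ofReal ((W k) ^ (-(1 / p))) := by
      intro k
      have h1 : ENNReal.ofReal ((W k) ^ (1 / p)) * f k ≤ M :=
        le_iSup (fun m => ENNReal.ofReal ((W m) ^ (1 / p)) * f m) k
      have h2 : f k ≤ M / ENNReal.ofReal ((W k) ^ (1 / p)) := by
        rw [ENNReal.le_div_iff_mul_le
          (Or.inl (ENNReal.ofReal_pos.2 (Real.rpow_pos_of_pos (hW k) _)).ne')
          (Or.inl ENNReal.ofReal_ne_top)]
        rwa [mul_comm]
      refine h2.trans (le_of_eq ?_)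
      rw [div_eq_mul_inv, ← ENNReal.ofReal_inv_of_pos (Real.rpow_pos_of_pos (hW k) _),
        ← Real.rpow_neg (hW k).le]
    refine iSup_le fun n => ?_
    have hbnd : (0:ℝ) ≤ C * ((n:ℝ) + 1) * (W n) ^ (-(1 / p)) :=
      mul_nonneg (mul_nonneg hCpos.le (by positivity)) (Real.rpow_nonneg (hW n).le _)
    have hsum : (∑ k ∈ Finset.range (n + 1), f k) ≤
        M * ENNReal.ofReal (C * ((n : ℝ) + 1) * (W n) ^ (-(1 / p))) := by
      calc (∑ k ∈ Finset.range (n + 1), f k)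
          ≤ ∑ k ∈ Finset.range (n + 1), M * ENNReal.ofReal ((W k) ^ (-(1 / p))) :=
            Finset.sum_le_sum fun k _ => hfk k
        _ = M * ENNReal.ofReal (∑ k ∈ Finset.range (n + 1), (W k) ^ (-(1 / p))) := by
            rw [← Finset.mul_sum,
              ENNReal.ofReal_sum_of_nonneg (fun k _ => Real.rpow_nonneg (hW k).le _)]
        _ ≤ M * ENNReal.ofReal (C * ((n : ℝ) + 1) * (W n) ^ (-(1 / p))) :=
            mul_le_mul_right (ENNReal.ofReal_le_ofReal (hC n)) M
    have hd : ((n : ℝ≥0∞) + 1) = ENNReal.ofReal ((n : ℝ) + 1) := by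
      rw [ENNReal.ofReal_add (Nat.cast_nonneg n) zero_le_one]; simp
    calc ENNReal.ofReal ((W n) ^ (1 / p)) * ((∑ k ∈ Finset.range (n + 1), f k) / ((n : ℝ≥0∞) + 1))
        ≤ ENNReal.ofReal ((W n) ^ (1 / p)) *
          ((M * ENNReal.ofReal (C * ((n : ℝ) + 1) * (W n) ^ (-(1 / p)))) / ((n : ℝ≥0∞) + 1)) := by
          gcongr
      _ = M * (ENNReal.ofReal ((W n) ^ (1 / p)) *
            ENNReal.ofReal (C * ((n : ℝ) + 1) * (W n) ^ (-(1 / p))) / ((n : ℝ≥0∞) + 1)) := by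
          simp only [div_eq_mul_inv]
          ac_rfl
      _ = M * (ENNReal.ofReal (C * ((n : ℝ) + 1)) / ((n : ℝ≥0∞) + 1)) := by
          rw [← ENNReal.ofReal_mul (Real.rpow_nonneg (hW n).le _)]
          congr 2
          rw [show (W n) ^ (1/p) * (C * ((n:ℝ)+1) * (W n) ^ (-(1/p)))
              = C * ((n:ℝ)+1) * ((W n) ^ (1/p) * (W n) ^ (-(1/p))) by ring,
            ← Real.rpow_add (hW n)]
          simp
      _ = M * ENNReal.ofReal C := by
          congr 1
          rw [hd, ENNReal.ofReal_mul hCpos.le, mul_div_assoc,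
            ENNReal.div_self (by positivity) ENNReal.ofReal_ne_top, mul_one]
      _ = (C.toNNReal : ℝ≥0∞) * M := by
          rw [mul_comm, ENNReal.ofReal]
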